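/- The longest odd divided difference operator satisfies ∂_{w_0}(x^δ) = (−1)^{binom(n,3)}, where ∂_{w_0} = ∂_1(∂_2∂_1)···(∂_{n−1}···∂_1) and x^δ = x_1^{n−1}x_2^{n−2}···x_{n−1}. -/

import Mathlib

/-- The (0-indexed) word `∂_1(∂_2∂_1)⋯(∂_{n−1}⋯∂_1)` of simple indices defining
the longest odd divided difference operator `∂_{w_0}`. -/
def w0List : ℕ → List ℕ
  | 0 => []
  | n + 1 => w0List n ++ (List.range n).reverse

/-- The staircase monomial `x^δ = x_1^{n−1} x_2^{n−2} ⋯ x_{n−1}`. -/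
noncomputable def xDeltaN {A : Type*} [Ring A] (n : ℕ) (x : ℕ → A) : A :=
  ((List.range n).map fun i => x i ^ (n - 1 - i)).prod

/-- Composite of a list of operators, leftmost applied last
(so `opProd [f₁,…,f_m] = f₁ ∘ ⋯ ∘ f_m`). -/
def opProd {A : Type*} (l : List (A → A)) : A → A := l.foldr (· ∘ ·) id

def eaF (m j i : ℕ) : ℕ := m - i - (if i < j then 1 else 0)


noncomputable def monF {A : Type*} [Ring A] (x : ℕ → A) (a : ℕ → ℕ) (s len : ℕ) : A :=
  ((List.range len).map fun t => x (s + t) ^ a (s + t)).prod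

lemma monF_zero {A : Type*} [Ring A] (x : ℕ → A) (a : ℕ → ℕ) (s : ℕ) : monF x a s 0 = 1 := rfl

lemma monF_succ {A : Type*} [Ring A] (x : ℕ → A) (a : ℕ → ℕ) (s len : ℕ) :
    monF x a s (len+1) = monF x a s len * x (s+len) ^ a (s+len) := by
  simp [monF, List.range_succ]

lemma monF_one {A : Type*} [Ring A] (x : ℕ → A) (a : ℕ → ℕ) (s : ℕ) :
    monF x a s 1 = x s ^ a s := by
  rw [show (1:ℕ) = 0+1 from rfl, monF_succ, monF_zero, one_mul, Nat.add_zero]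

lemma monF_add {A : Type*} [Ring A] (x : ℕ → A) (a : ℕ → ℕ) (s u v : ℕ) :
    monF x a s (u+v) = monF x a s u * monF x a (s+u) v := by
  induction v with
  | zero => simp [monF_zero]
  | succ v ih =>
      rw [← Nat.add_assoc, monF_succ, ih, monF_succ, mul_assoc, Nat.add_assoc]

lemma monF_congr {A : Type*} [Ring A] (x : ℕ → A) (a b : ℕ → ℕ) (s len : ℕ)
    (h : ∀ t, t < len → a (s+t) = b (s+t)) : monF x a s len = monF x b s len := by
  unfold monF
  congr 1
  apply List.map_congr_left
  intro t ht
  rw [h t (List.mem_range.mp ht)]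

def Tsig (m j : ℕ) : ℕ := ∑ t ∈ Finset.range j, ∑ i ∈ Finset.range t, (m - 1 - i)

lemma opProd_append {A : Type*} (l₁ l₂ : List (A → A)) :
    opProd (l₁ ++ l₂) = opProd l₁ ∘ opProd l₂ := by
  induction l₁ with
  | nil => rfl
  | cons f l ih =>
      show f ∘ opProd (l ++ l₂) = (f ∘ opProd l) ∘ opProd l₂
      rw [ih]; rfl

lemma w0List_mem : ∀ m i, i ∈ w0List m → i + 1 < m := by
  intro m
  induction m with
  | zero => intro i h; simp [w0List] at h
  | succ m ih =>
      intro i h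
      rw [w0List, List.mem_append] at h
      rcases h with h | h
      · exact Nat.lt_succ_of_lt (ih i h)
      · rw [List.mem_reverse, List.mem_range] at h; omega

lemma gaussSum' : ∀ m : ℕ, ∑ t ∈ Finset.range m, t = m.choose 2 := by
  intro m
  induction m with
  | zero => simp
  | succ m ih =>
      have hc : (m+1).choose 2 = m.choose 1 + m.choose 2 := Nat.choose_succ_succ m 1
      rw [Finset.sum_range_succ, ih, hc, Nat.choose_one_right]
      omega

lemma hockSum : ∀ m : ℕ, ∑ t ∈ Finset.range m, t.choose 2 = m.choose 3 := by
  intro m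
  induction m with
  | zero => simp
  | succ m ih =>
      have hc : (m+1).choose 3 = m.choose 2 + m.choose 3 := Nat.choose_succ_succ m 2
      rw [Finset.sum_range_succ, ih, hc]
      omega

lemma Tsig_eq (m : ℕ) : Tsig m m = m.choose 2 + 2 * m.choose 3 := by
  have h1 : ∀ t, t ≤ m → (∑ i ∈ Finset.range t, (m - 1 - i)) + t.choose 2 = t * (m-1) := by
    intro t
    induction t with
    | zero => simp
    | succ t ih =>
        intro ht
        have h := ih (by omega)
        have hc : (t+1).choose 2 = t.choose 1 + t.choose 2 := Nat.choose_succ_succ t 1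
        rw [Finset.sum_range_succ, hc, Nat.choose_one_right, Nat.succ_mul]
        generalize hq : t * (m - 1) = q at *
        omega
  have h2 : Tsig m m + m.choose 3 = m.choose 2 * (m-1) := by
    unfold Tsig
    rw [← hockSum m, ← Finset.sum_add_distrib]
    rw [show m.choose 2 * (m-1) = ∑ t ∈ Finset.range m, t * (m-1) by
      rw [← Finset.sum_mul, gaussSum']]
    exact Finset.sum_congr rfl fun t ht => h1 t (le_of_lt (Finset.mem_range.mp ht))
  rcases Nat.lt_or_ge m 2 with hm | hm
  · interval_cases m <;> simp [Tsig] <;> rfl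
  · have h4 := Nat.choose_succ_right_eq m 2
    have h5 : m.choose 2 * (m-1) = m.choose 2 * (m-2) + m.choose 2 := by
      rw [show m-1 = (m-2)+1 by omega, Nat.mul_succ]
    have h6 : Tsig m m + m.choose 3 = m.choose 3 * 3 + m.choose 2 := by
      rw [h2, h5, ← h4]
    omega

/-- On `OPol_n` (abstractly: `x i` odd anticommuting generators
for `i < n`), let `δ i` be the odd divided difference operators: additive maps
with `δ i (x j) = 1` for `j ∈ {i, i+1}`, `0` otherwise, satisfying the twisted
Leibniz rule `δ i (fg) = δ i (f) g + σ i (f) δ i (g)` where `σ i` is the ring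
endomorphism `x_j ↦ −x_{s_i(j)}` (the composite of the simple transposition
`s_i` with the parity involution).  Then the longest odd divided difference
operator satisfies `∂_{w_0}(x^δ) = (−1)^{C(n,3)}`. -/
theorem stmt4 {A : Type*} [Ring A] (n : ℕ) (x : ℕ → A)
    (hxx : ∀ i j, i < n → j < n → i ≠ j → x i * x j = -(x j * x i))
    (σ : ℕ → A →+* A)
    (hσx : ∀ i j, i + 1 < n → j < n →
      σ i (x j) = -x (if j = i then i + 1 else if j = i + 1 then i else j))
    (δ : ℕ → A → A)
    (hδ_add : ∀ i, i + 1 < n → ∀ a b, δ i (a + b) = δ i a + δ i b)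
    (hδx : ∀ i j, i + 1 < n → j < n →
      δ i (x j) = if j = i ∨ j = i + 1 then 1 else 0)
    (hδ_leib : ∀ i, i + 1 < n → ∀ a b, δ i (a * b) = δ i a * b + σ i a * δ i b) :
    opProd ((w0List n).map δ) (xDeltaN n x) = (-1 : A) ^ (n.choose 3) := by

  classical
  have hδ0 : ∀ i, i + 1 < n → δ i 0 = 0 := by
    intro i hi
    have h := hδ_add i hi 0 0
    rw [add_zero] at h
    exact (left_eq_add.mp h)
  have hδ1 : ∀ i, i + 1 < n → δ i 1 = 0 := by
    intro i hi
    have h := hδ_leib i hi 1 1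
    rw [mul_one, map_one, one_mul, mul_one] at h
    exact (left_eq_add.mp h)
  have hδneg : ∀ i, i + 1 < n → ∀ v, δ i (-v) = - δ i v := by
    intro i hi v
    have h := hδ_add i hi v (-v)
    rw [add_neg_cancel, hδ0 i hi] at h
    exact eq_neg_of_add_eq_zero_right h.symm
  have hc : ∀ (k : ℕ) (v : A), v * (-1:A)^k = (-1:A)^k * v := by
    intro k v
    rcases Nat.even_or_odd k with h | h
    · rw [h.neg_one_pow, one_mul, mul_one]
    · rw [h.neg_one_pow]; simp
  have hδsgn : ∀ i, i + 1 < n → ∀ (k : ℕ) (v : A), δ i ((-1:A)^k * v) = (-1:A)^k * δ i v := by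
    intro i hi k v
    rcases Nat.even_or_odd k with h | h
    · rw [h.neg_one_pow, one_mul, one_mul]
    · rw [h.neg_one_pow, neg_one_mul, neg_one_mul, hδneg i hi]
  have hpull : ∀ (k l : ℕ) (u v : A), ((-1:A)^k * u) * ((-1:A)^l * v) = (-1:A)^(k+l) * (u * v) := by
    intro k l u v
    calc ((-1:A)^k * u) * ((-1:A)^l * v) = (-1:A)^k * ((u * (-1:A)^l) * v) := by
          rw [mul_assoc, mul_assoc]
      _ = (-1:A)^k * (((-1:A)^l * u) * v) := by rw [hc]
      _ = (-1:A)^(k+l) * (u * v) := by rw [mul_assoc, ← mul_assoc, ← pow_add]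
  have hσxi : ∀ i k, i + 1 < n → k < n → k ≠ i → k ≠ i+1 → σ i (x k) = - x k := by
    intro i k hi hk h1 h2
    rw [hσx i k hi hk, if_neg h1, if_neg h2]
  have hσpow : ∀ i k e, i + 1 < n → k < n → k ≠ i → k ≠ i+1 →
      σ i (x k ^ e) = (-1:A)^e * x k ^ e := by
    intro i k e hi hk h1 h2
    rw [map_pow, hσxi i k hi hk h1 h2, neg_pow (x k) e]
  have hδxk : ∀ i k, i + 1 < n → k < n → k ≠ i → k ≠ i+1 → δ i (x k) = 0 := by
    intro i k hi hk h1 h2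
    rw [hδx i k hi hk, if_neg (by tauto)]
  have hδpowk : ∀ i k e, i + 1 < n → k < n → k ≠ i → k ≠ i+1 → δ i (x k ^ e) = 0 := by
    intro i k e hi hk h1 h2
    induction e with
    | zero => rw [pow_zero]; exact hδ1 i hi
    | succ e ih =>
        rw [pow_succ, hδ_leib i hi, ih, zero_mul, hδxk i k hi hk h1 h2, mul_zero, add_zero]
  have hyx : ∀ j, j + 1 < n → ∀ e, x (j+1) * x j ^ e = (-1:A)^e * (x j ^ e * x (j+1)) := by
    intro j hj e
    induction e with
    | zero => simp
    | succ e ih =>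
        rw [pow_succ']
        calc x (j+1) * (x j * x j ^ e) = (x (j+1) * x j) * x j ^ e := by rw [mul_assoc]
          _ = -((x j * x (j+1)) * x j ^ e) := by
              rw [hxx (j+1) j (by omega) (by omega) (by omega), neg_mul]
          _ = -(x j * ((-1:A)^e * (x j ^ e * x (j+1)))) := by rw [mul_assoc, ih]
          _ = -((-1:A)^e * (x j * (x j ^ e * x (j+1)))) := by
              rw [← mul_assoc, hc e (x j), mul_assoc]
          _ = (-1:A)^(e+1) * ((x j * x j ^ e) * x (j+1)) := by
              rw [pow_succ, mul_assoc ((-1:A)^e) (-1:A), neg_one_mul, mul_neg, mul_assoc]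
  have hyx2 : ∀ j, j + 1 < n → ∀ b e, x (j+1)^b * x j ^ e = (-1:A)^(e*b) * (x j ^ e * x (j+1)^b) := by
    intro j hj b e
    induction b with
    | zero => simp
    | succ b ih =>
        rw [pow_succ']
        calc (x (j+1) * x (j+1)^b) * x j ^ e = x (j+1) * (x (j+1)^b * x j ^ e) := by rw [mul_assoc]
          _ = x (j+1) * ((-1:A)^(e*b) * (x j ^ e * x (j+1)^b)) := by rw [ih]
          _ = (-1:A)^(e*b) * ((x (j+1) * x j ^ e) * x (j+1)^b) := by
              rw [← mul_assoc, hc (e*b) (x (j+1)), mul_assoc, mul_assoc]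
          _ = (-1:A)^(e*b) * (((-1:A)^e * (x j ^ e * x (j+1))) * x (j+1)^b) := by
              rw [hyx j hj e]
          _ = (-1:A)^(e*b) * ((-1:A)^e * ((x j ^ e * x (j+1)) * x (j+1)^b)) := by
              rw [mul_assoc]
          _ = (-1:A)^(e*b+e) * ((x j ^ e * x (j+1)) * x (j+1)^b) := by
              rw [← mul_assoc, ← pow_add]
          _ = (-1:A)^(e*(b+1)) * (x j ^ e * (x (j+1) * x (j+1)^b)) := by
              rw [Nat.mul_succ, mul_assoc]
  have K2 : ∀ j, j + 1 < n → ∀ e, δ j (x j ^ e * x (j+1) ^ e) = 0 := by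
    intro j hj e
    have hjn : j < n := by omega
    have e1 : σ j (x j) = - x (j+1) := by rw [hσx j j hj hjn]; simp
    have e2 : σ j (x (j+1)) = - x j := by
      rw [hσx j (j+1) hj hj]; simp [show ¬(j+1=j) by omega]
    induction e with
    | zero => simpa using hδ1 j hj
    | succ e ih =>
        have hee : (-1:A)^(e*e) = (-1:A)^e := by
          rcases Nat.even_or_odd e with he | he
          · rw [he.neg_one_pow, (he.mul_right e).neg_one_pow]
          · rw [he.neg_one_pow, (he.mul he).neg_one_pow]
        have hσXY : σ j (x j ^ e * x (j+1) ^ e) = (-1:A)^e * (x j ^ e * x (j+1) ^ e) := by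
          rw [map_mul, map_pow, map_pow, e1, e2, neg_pow (x (j+1)) e, neg_pow (x j) e, hpull,
            (show Even (e+e) from ⟨e, rfl⟩).neg_one_pow, one_mul, hyx2 j hj e e, hee]
        have h3 : δ j (x j ^ e * x (j+1) ^ (e+1)) = (-1:A)^e * (x j ^ e * x (j+1) ^ e) := by
          have hY : x j ^ e * x (j+1) ^ (e+1) = (x j ^ e * x (j+1) ^ e) * x (j+1) := by
            rw [pow_succ, mul_assoc]
          rw [hY, hδ_leib j hj, ih, zero_mul, zero_add, hσXY,
            hδx j (j+1) hj hj, if_pos (Or.inr rfl), mul_one]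
        have hX : x j ^ (e+1) * x (j+1) ^ (e+1) = x j * (x j ^ e * x (j+1) ^ (e+1)) := by
          rw [pow_succ', mul_assoc]
        rw [hX, hδ_leib j hj, hδx j j hj hjn, if_pos (Or.inl rfl), one_mul, e1, h3]
        have h4 : (-x (j+1)) * ((-1:A)^e * (x j ^ e * x (j+1) ^ e)) =
            -(x j ^ e * x (j+1) ^ (e+1)) := by
          calc (-x (j+1)) * ((-1:A)^e * (x j ^ e * x (j+1) ^ e))
              = -((x (j+1) * (-1:A)^e) * (x j ^ e * x (j+1) ^ e)) := by
                rw [neg_mul, mul_assoc]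
            _ = -((-1:A)^e * (x (j+1) * (x j ^ e * x (j+1) ^ e))) := by rw [hc, mul_assoc]
            _ = -((-1:A)^e * ((x (j+1) * x j ^ e) * x (j+1) ^ e)) := by rw [mul_assoc]
            _ = -((-1:A)^e * (((-1:A)^e * (x j ^ e * x (j+1))) * x (j+1) ^ e)) := by
                rw [hyx j hj]
            _ = -((-1:A)^e * ((-1:A)^e * ((x j ^ e * x (j+1)) * x (j+1) ^ e))) := by
                rw [mul_assoc ((-1:A)^e) (x j ^ e * x (j+1)) (x (j+1) ^ e)]
            _ = -(((-1:A)^(e+e)) * ((x j ^ e * x (j+1)) * x (j+1) ^ e)) := by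
                rw [← mul_assoc, ← pow_add]
            _ = -((x j ^ e * x (j+1)) * x (j+1) ^ e) := by
                rw [(show Even (e+e) from ⟨e, rfl⟩).neg_one_pow, one_mul]
            _ = -(x j ^ e * x (j+1) ^ (e+1)) := by rw [mul_assoc, ← pow_succ']
        rw [h4, add_neg_cancel]
  have dK : ∀ j, j + 1 < n → ∀ e, δ j (x j ^ (e+1) * x (j+1) ^ e) = x j ^ e * x (j+1) ^ e := by
    intro j hj e
    have hjn : j < n := by omega
    have hX : x j ^ (e+1) * x (j+1) ^ e = x j * (x j ^ e * x (j+1) ^ e) := by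
      rw [pow_succ', mul_assoc]
    rw [hX, hδ_leib j hj, hδx j j hj hjn, if_pos (Or.inl rfl), one_mul, K2 j hj e,
      mul_zero, add_zero]
  have dsign : ∀ j (a : ℕ → ℕ) (s len : ℕ), j + 1 < n →
      (∀ t, t < len → s + t < n ∧ s + t ≠ j ∧ s + t ≠ j + 1) →
      σ j (monF x a s len) = (-1:A)^(∑ t ∈ Finset.range len, a (s+t)) * monF x a s len := by
    intro j a s len hj hcond
    induction len with
    | zero => simp [monF_zero]
    | succ len ih =>
        obtain ⟨h1, h2, h3⟩ := hcond len (by omega)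
        rw [monF_succ, map_mul, ih (fun t ht => hcond t (by omega)),
          hσpow j (s+len) (a (s+len)) hj h1 h2 h3, hpull, Finset.sum_range_succ]
  have dkill : ∀ j (a : ℕ → ℕ) (s len : ℕ), j + 1 < n →
      (∀ t, t < len → s + t < n ∧ s + t ≠ j ∧ s + t ≠ j + 1) →
      δ j (monF x a s len) = 0 := by
    intro j a s len hj hcond
    induction len with
    | zero => rw [monF_zero]; exact hδ1 j hj
    | succ len ih =>
        obtain ⟨h1, h2, h3⟩ := hcond len (by omega)
        rw [monF_succ, hδ_leib j hj, ih (fun t ht => hcond t (by omega)), zero_mul,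
          hδpowk j (s+len) (a (s+len)) hj h1 h2 h3, mul_zero, add_zero]
  have hstep : ∀ m j, m < n → j < m →
      δ j (monF x (eaF m j) 0 (m+1)) =
        (-1:A)^(∑ i ∈ Finset.range j, (m - 1 - i)) * monF x (eaF m (j+1)) 0 (m+1) := by
    intro m j hm hj
    have hj1 : j + 1 < n := by omega
    set e := m - 1 - j with he
    have hsplitN : m + 1 = j + (1 + (1 + e)) := by omega
    have hdecomp : ∀ (a : ℕ → ℕ), monF x a 0 (m+1) =
        monF x a 0 j * (x j ^ a j * (x (j+1) ^ a (j+1) * monF x a (j+1+1) e)) := by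
      intro a
      rw [hsplitN, monF_add, monF_add, monF_add, monF_one, monF_one]
      simp [Nat.zero_add]
    have haj : eaF m j j = e + 1 := by
      unfold eaF; rw [if_neg (Nat.lt_irrefl j)]; omega
    have haj2 : eaF m j (j+1) = e := by
      unfold eaF; rw [if_neg (by omega : ¬ j + 1 < j)]; omega
    have hbj : eaF m (j+1) j = e := by
      unfold eaF; rw [if_pos (by omega : j < j + 1)]; omega
    have hbj2 : eaF m (j+1) (j+1) = e := by
      unfold eaF; rw [if_neg (Nat.lt_irrefl (j+1))]; omega
    have hP0 : δ j (monF x (eaF m j) 0 j) = 0 :=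
      dkill j _ 0 j hj1 (fun t ht => by omega)
    have hT0 : δ j (monF x (eaF m j) (j+1+1) e) = 0 :=
      dkill j _ (j+1+1) e hj1 (fun t ht => by omega)
    have hPs : σ j (monF x (eaF m j) 0 j) =
        (-1:A)^(∑ t ∈ Finset.range j, eaF m j (0+t)) * monF x (eaF m j) 0 j :=
      dsign j _ 0 j hj1 (fun t ht => by omega)
    have hsum : (∑ t ∈ Finset.range j, eaF m j (0+t)) = ∑ i ∈ Finset.range j, (m - 1 - i) := by
      refine Finset.sum_congr rfl (fun t ht => ?_)
      have ht' := Finset.mem_range.mp ht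
      unfold eaF
      rw [Nat.zero_add, if_pos ht']
      omega
    have hPP : monF x (eaF m (j+1)) 0 j = monF x (eaF m j) 0 j := by
      refine monF_congr x _ _ 0 j (fun t ht => ?_)
      unfold eaF
      rw [Nat.zero_add, if_pos ht, if_pos (by omega : t < j + 1)]
    have hTT : monF x (eaF m (j+1)) (j+1+1) e = monF x (eaF m j) (j+1+1) e := by
      refine monF_congr x _ _ (j+1+1) e (fun t ht => ?_)
      unfold eaF
      rw [if_neg (by omega : ¬ j + 1 + 1 + t < j + 1), if_neg (by omega : ¬ j + 1 + 1 + t < j)]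
    rw [hdecomp (eaF m j), hdecomp (eaF m (j+1)), haj, haj2, hbj, hbj2, hPP, hTT, ← hsum]
    rw [show x j ^ (e+1) * (x (j+1) ^ e * monF x (eaF m j) (j+1+1) e)
        = (x j ^ (e+1) * x (j+1) ^ e) * monF x (eaF m j) (j+1+1) e from (mul_assoc _ _ _).symm]
    rw [hδ_leib j hj1, hP0, zero_mul, zero_add, hδ_leib j hj1, hT0, mul_zero, add_zero,
      dK j hj1 e, hPs]
    rw [mul_assoc ((-1:A)^(∑ t ∈ Finset.range j, eaF m j (0+t))), mul_assoc]
  have hblock : ∀ m, m < n → ∀ j, j ≤ m →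
      opProd (((List.range j).reverse).map δ) (monF x (eaF m 0) 0 (m+1)) =
        (-1:A)^(Tsig m j) * monF x (eaF m j) 0 (m+1) := by
    intro m hm j
    induction j with
    | zero => intro _; simp [opProd, Tsig]
    | succ j ih =>
        intro hj
        have hj1 : j + 1 < n := by omega
        have hrev : (((List.range (j+1)).reverse).map δ) = δ j :: (((List.range j).reverse).map δ) := by
          rw [List.range_succ]; simp
        rw [hrev]
        show δ j (opProd (((List.range j).reverse).map δ) (monF x (eaF m 0) 0 (m+1))) = _
        rw [ih (by omega), hδsgn j hj1, hstep m j hm (by omega), ← mul_assoc, ← pow_add,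
          show Tsig m j + (∑ i ∈ Finset.range j, (m - 1 - i)) = Tsig m (j+1) from
            (Finset.sum_range_succ _ j).symm]
  have hpullop : ∀ (l : List ℕ), (∀ i ∈ l, i + 1 < n) → ∀ (k : ℕ) (v : A),
      opProd (l.map δ) ((-1:A)^k * v) = (-1:A)^k * opProd (l.map δ) v := by
    intro l
    induction l with
    | nil => intro _ k v; rfl
    | cons i l ihl =>
        intro hl k v
        show δ i (opProd (l.map δ) ((-1:A)^k * v)) = (-1:A)^k * δ i (opProd (l.map δ) v)
        rw [ihl (fun i hi => hl i (List.mem_cons_of_mem _ hi)) k v,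
          hδsgn i (hl i List.mem_cons_self)]
  have houter : ∀ m, m ≤ n → opProd ((w0List m).map δ) (xDeltaN m x) = (-1:A)^(m.choose 3) := by
    intro m
    induction m with
    | zero => intro _; simp [w0List, xDeltaN, opProd]
    | succ m ih =>
        intro hm
        have hm' : m < n := by omega
        have hinit : xDeltaN (m+1) x = monF x (eaF m 0) 0 (m+1) := by
          unfold xDeltaN monF
          congr 1
          refine List.map_congr_left (fun i hi => ?_)
          have : m + 1 - 1 - i = eaF m 0 (0 + i) := by
            unfold eaF; rw [if_neg (Nat.not_lt_zero _)]; omega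
          rw [Nat.zero_add] at this ⊢
          rw [this]
        have hfinal : monF x (eaF m m) 0 (m+1) = xDeltaN m x := by
          rw [monF_succ]
          have h0 : eaF m m (0+m) = 0 := by
            unfold eaF; rw [Nat.zero_add, if_neg (Nat.lt_irrefl m)]; omega
          rw [h0, pow_zero, mul_one]
          unfold xDeltaN monF
          congr 1
          refine List.map_congr_left (fun i hi => ?_)
          have hi' := List.mem_range.mp hi
          have : eaF m m (0 + i) = m - 1 - i := by
            unfold eaF; rw [Nat.zero_add, if_pos hi']; omega
          rw [Nat.zero_add] at this ⊢
          rw [this]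
        have hw : w0List (m+1) = w0List m ++ (List.range m).reverse := rfl
        rw [hw, List.map_append, opProd_append]
        show opProd ((w0List m).map δ) (opProd (((List.range m).reverse).map δ) (xDeltaN (m+1) x)) = _
        rw [hinit, hblock m hm' m le_rfl, hfinal,
          hpullop _ (fun i hi => by have := w0List_mem m i hi; omega), ih (by omega)]
        have hnum : Tsig m m + m.choose 3 = (m+1).choose 3 + 2 * m.choose 3 := by
          have hc3 : (m+1).choose 3 = m.choose 2 + m.choose 3 := Nat.choose_succ_succ m 2
          rw [Tsig_eq]; omega
        rw [← pow_add, hnum, pow_add, pow_mul]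
        norm_num
  exact houter n le_rfl
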